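/- Let 1 ≤ k ≤ n_1 ≤ n_2 ≤ ... ≤ n_r be integers. The maximum number of edges in a subhypergraph of the complete r-partite r-uniform hypergraph K^{(r)}_{n_1,...,n_r} with no matching of size k equals (k−1) n_2 n_3 ⋯ n_r. -/

import Mathlib

/-- `H` (a family of finite edge sets) contains a matching of size `k`:
`k` pairwise disjoint edges. -/
def hasMatching {α : Type*} [DecidableEq α] (H : Finset (Finset α)) (k : ℕ) : Prop :=
  ∃ M ⊆ H, M.card = k ∧ (M : Set (Finset α)).Pairwise Disjoint

/-- The edge set of the complete `r`-partite `s`-uniform hypergraph with parts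
`V i = Fin (n i)`: all `s`-sets meeting each part in at most one vertex. -/
def crossEdges (r s : ℕ) (n : Fin r → ℕ) : Finset (Finset ((i : Fin r) × Fin (n i))) :=
  Finset.univ.filter fun S =>
    S.card = s ∧ ∀ i : Fin r, (S.filter fun v => v.1 = i).card ≤ 1

/-- `T` is a copy of `K_r^{(s)}` in the `s`-graph `H`: it is a transversal
(one vertex in each part) all of whose `s`-subsets are edges of `H`. -/
def isKrCopy (r s : ℕ) (n : Fin r → ℕ) (H : Finset (Finset ((i : Fin r) × Fin (n i))))
    (T : Finset ((i : Fin r) × Fin (n i))) : Prop :=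
  (∀ i : Fin r, (T.filter fun v => v.1 = i).card = 1) ∧ ∀ S ∈ T.powersetCard s, S ∈ H

/-- `H` contains `k` pairwise vertex-disjoint copies of `K_r^{(s)}`. -/
def hasKDisjointKr (r s k : ℕ) (n : Fin r → ℕ)
    (H : Finset (Finset ((i : Fin r) × Fin (n i)))) : Prop :=
  ∃ C : Finset (Finset ((i : Fin r) × Fin (n i))), C.card = k ∧
    (∀ T ∈ C, isKrCopy r s n H T) ∧
    (C : Set (Finset ((i : Fin r) × Fin (n i)))).Pairwise Disjoint

/-- The number of `s`-cliques of the graph with edge set `H`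
(an `s`-clique is an `s`-set all of whose `2`-subsets are edges). -/
def cliqueCount (r s : ℕ) (n : Fin r → ℕ)
    (H : Finset (Finset ((i : Fin r) × Fin (n i)))) : ℕ :=
  (Finset.univ.filter fun S : Finset ((i : Fin r) × Fin (n i)) =>
    S.card = s ∧ ∀ e ∈ S.powersetCard 2, e ∈ H).card


open Finset

section helper
variable {r : ℕ} {n : Fin r → ℕ}

def toEdge (n : Fin r → ℕ) (g : ∀ i, Fin (n i)) : Finset ((i : Fin r) × Fin (n i)) :=
  Finset.univ.image fun i => ⟨i, g i⟩

lemma mk_mem_toEdge_iff {g : ∀ i, Fin (n i)} {i : Fin r} {x : Fin (n i)} :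
    (⟨i, x⟩ : (j : Fin r) × Fin (n j)) ∈ toEdge n g ↔ x = g i := by
  simp only [toEdge, mem_image, mem_univ, true_and]
  constructor
  · rintro ⟨j, hj⟩
    obtain ⟨rfl, h⟩ := Sigma.mk.inj_iff.mp hj
    exact (eq_of_heq h).symm
  · rintro rfl; exact ⟨i, rfl⟩

lemma toEdge_injective : Function.Injective (toEdge n) := by
  intro g g' h
  funext i
  have : (⟨i, g i⟩ : (j : Fin r) × Fin (n j)) ∈ toEdge n g' := by
    rw [← h]; exact mk_mem_toEdge_iff.mpr rfl
  exact mk_mem_toEdge_iff.mp this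

lemma card_toEdge (g : ∀ i, Fin (n i)) : (toEdge n g).card = r := by
  rw [toEdge, Finset.card_image_of_injective _ (fun a b h => congrArg Sigma.fst h)]
  simp

lemma toEdge_filter (g : ∀ i, Fin (n i)) (i : Fin r) :
    (toEdge n g).filter (fun v => v.1 = i) = {⟨i, g i⟩} := by
  ext ⟨j, x⟩
  simp only [mem_filter, mk_mem_toEdge_iff, mem_singleton]
  constructor
  · rintro ⟨rfl, rfl⟩; rfl
  · rintro h
    obtain ⟨rfl, h2⟩ := Sigma.mk.inj_iff.mp h
    exact ⟨eq_of_heq h2, rfl⟩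

lemma toEdge_mem_cross (g : ∀ i, Fin (n i)) : toEdge n g ∈ crossEdges r r n := by
  rw [crossEdges, mem_filter]
  refine ⟨mem_univ _, card_toEdge g, fun i => ?_⟩
  rw [toEdge_filter]; simp

lemma exists_toEdge {e : Finset ((i : Fin r) × Fin (n i))} (he : e ∈ crossEdges r r n) :
    ∃ g : ∀ i, Fin (n i), toEdge n g = e := by
  rw [crossEdges, mem_filter] at he
  obtain ⟨-, hcard, hfil⟩ := he
  have hsum : ∑ i : Fin r, (e.filter fun v => v.1 = i).card = e.card :=
    (Finset.card_eq_sum_card_fiberwise (fun v _ => Finset.mem_univ v.1)).symm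
  have hone : ∀ i, (e.filter fun v => v.1 = i).card = 1 := by
    intro i
    by_contra h
    have h0 : (e.filter fun v => v.1 = i).card = 0 := by have := hfil i; omega
    have hle := Finset.sum_le_card_nsmul (univ.erase i)
      (fun j => (e.filter fun v => v.1 = j).card) 1 (fun j _ => hfil j)
    rw [← Finset.add_sum_erase _ _ (mem_univ i)] at hsum
    simp only [smul_eq_mul, mul_one, Finset.card_erase_of_mem (mem_univ i), card_univ,
      Fintype.card_fin] at hle
    have hrpos : 0 < r := i.pos
    rw [h0, zero_add] at hsum
    rw [hsum, hcard] at hle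
    omega
  have hex : ∀ i, ∃ x : Fin (n i), (⟨i, x⟩ : (j : Fin r) × Fin (n j)) ∈ e := by
    intro i
    obtain ⟨v, hv⟩ := Finset.card_eq_one.mp (hone i)
    have hvmem : v ∈ e.filter fun v => v.1 = i := hv ▸ Finset.mem_singleton_self v
    rw [Finset.mem_filter] at hvmem
    obtain ⟨hve, hv1⟩ := hvmem
    obtain ⟨a, b⟩ := v
    dsimp at hv1
    subst hv1
    exact ⟨b, hve⟩
  choose g hg using hex
  have hsub : toEdge n g ⊆ e := by
    intro v hv
    rw [toEdge, mem_image] at hv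
    obtain ⟨i, -, rfl⟩ := hv
    exact hg i
  exact ⟨g, Finset.eq_of_subset_of_card_le hsub (by rw [hcard, card_toEdge])⟩

lemma toEdge_disjoint {g g' : ∀ i, Fin (n i)} (h : ∀ i, g i ≠ g' i) :
    Disjoint (toEdge n g) (toEdge n g') := by
  rw [Finset.disjoint_left]
  rintro ⟨i, x⟩ hx hx'
  exact h i (mk_mem_toEdge_iff.mp hx ▸ mk_mem_toEdge_iff.mp hx')

lemma card_filter_lt (m t : ℕ) (h : t ≤ m) :
    ((univ : Finset (Fin m)).filter fun x : Fin m => (x : ℕ) < t).card = t := by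
  have : ((univ : Finset (Fin m)).filter fun x : Fin m => (x : ℕ) < t)
      = Finset.map (Fin.castLEEmb h) univ := by
    ext x
    simp only [mem_filter, mem_univ, true_and, Finset.mem_map]
    constructor
    · intro hx; exact ⟨⟨(x : ℕ), hx⟩, by ext; simp⟩
    · rintro ⟨y, rfl⟩; simpa using y.isLt
  rw [this, Finset.card_map, card_univ, Fintype.card_fin]


lemma fiber_ne (hr : 0 < r) (hmono : Monotone n) {k : ℕ} (hk : 1 ≤ k) (hkn : k ≤ n ⟨0, hr⟩)
    {g g' : ∀ i, Fin (n i)}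
    (hφ : ∀ i : Fin r, 0 < i.val →
      ((g i : ℕ) + (n i - (g ⟨0, hr⟩ : ℕ))) % n i
        = ((g' i : ℕ) + (n i - (g' ⟨0, hr⟩ : ℕ))) % n i)
    (hne : g ≠ g') : ∀ i, g i ≠ g' i := by
  have hle : ∀ i : Fin r, n ⟨0, hr⟩ ≤ n i := fun i => hmono (by simp [Fin.le_def])
  have hz : g ⟨0, hr⟩ ≠ g' ⟨0, hr⟩ := by
    intro h
    apply hne
    funext i
    by_cases hi : 0 < i.val
    · have h1 := hφ i hi
      rw [h] at h1
      have h2 : ((g i : ℕ)) % n i = (g' i : ℕ) % n i := Nat.ModEq.add_right_cancel' _ h1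
      rw [Nat.mod_eq_of_lt (g i).isLt, Nat.mod_eq_of_lt (g' i).isLt] at h2
      exact Fin.ext h2
    · have hieq : i = ⟨0, hr⟩ := Fin.ext (show i.val = 0 by omega)
      rw [hieq, h]
  intro i
  by_cases hi : 0 < i.val
  · intro hgi
    have h1 := hφ i hi
    rw [hgi] at h1
    have h2 : (n i - ((g ⟨0, hr⟩ : ℕ))) ≡ (n i - ((g' ⟨0, hr⟩ : ℕ))) [MOD n i] :=
      Nat.ModEq.add_left_cancel' _ h1
    set x := ((g ⟨0, hr⟩ : Fin (n ⟨0, hr⟩)) : ℕ) with hxdef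
    set x' := ((g' ⟨0, hr⟩ : Fin (n ⟨0, hr⟩)) : ℕ) with hxdef'
    have hx : x < n i := lt_of_lt_of_le (g ⟨0, hr⟩).isLt (hle i)
    have hx' : x' < n i := lt_of_lt_of_le (g' ⟨0, hr⟩).isLt (hle i)
    have h3 := h2.add_right (x + x')
    have e1 : (n i - x) + (x + x') = n i + x' := by omega
    have e2 : (n i - x') + (x + x') = n i + x := by omega
    rw [e1, e2] at h3
    have h4 : x' ≡ x [MOD n i] := Nat.ModEq.add_left_cancel' _ h3
    have h5 : x' = x := by
      rw [Nat.ModEq, Nat.mod_eq_of_lt hx', Nat.mod_eq_of_lt hx] at h4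
      exact h4
    exact hz (Fin.ext h5.symm)
  · have hieq : i = ⟨0, hr⟩ := Fin.ext (show i.val = 0 by omega)
    rw [hieq]
    exact hz

end helper

theorem stmt2 (r k : ℕ) (hr : 0 < r) (n : Fin r → ℕ) (hmono : Monotone n)
    (hk : 1 ≤ k) (hkn : k ≤ n ⟨0, hr⟩) :
    IsGreatest {m : ℕ | ∃ H ⊆ crossEdges r r n, ¬ hasMatching H k ∧ H.card = m}
      ((k - 1) * ∏ i ∈ Finset.univ.filter (fun i : Fin r => 0 < i.val), n i) := by
  classical
  have hnpos : ∀ i, 0 < n i := fun i =>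
    lt_of_lt_of_le (lt_of_lt_of_le hk hkn) (hmono (by simp [Fin.le_def]))
  constructor
  · -- membership: the construction
    set A : ∀ i : Fin r, Finset (Fin (n i)) := fun i =>
      if (i : ℕ) = 0 then (univ.filter fun x : Fin (n i) => (x : ℕ) < k - 1) else univ with hA
    set G₀ := Fintype.piFinset A with hG₀
    refine ⟨G₀.image (toEdge n), ?_, ?_, ?_⟩
    · intro e he
      obtain ⟨g, -, rfl⟩ := mem_image.mp he
      exact toEdge_mem_cross g
    · rintro ⟨M, hM, hMcard, hMdisj⟩
      set N := G₀.filter (fun g => toEdge n g ∈ M) with hN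
      have hMN : M = N.image (toEdge n) := by
        ext e; constructor
        · intro heM
          obtain ⟨g, hg, rfl⟩ := mem_image.mp (hM heM)
          exact mem_image.mpr ⟨g, mem_filter.mpr ⟨hg, heM⟩, rfl⟩
        · intro he
          obtain ⟨g, hg, rfl⟩ := mem_image.mp he
          exact (mem_filter.mp hg).2
      have hNcard : N.card = k := by
        rw [hMN, Finset.card_image_of_injective _ toEdge_injective] at hMcard
        exact hMcard
      have hinj : Set.InjOn (fun g : ∀ i, Fin (n i) => g ⟨0, hr⟩) N := by
        intro g hg g' hg' hgz
        by_contra hne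
        have hdisj : Disjoint (toEdge n g) (toEdge n g') :=
          hMdisj (mem_coe.mpr (mem_filter.mp hg).2) (mem_coe.mpr (mem_filter.mp hg').2)
            (fun h => hne (toEdge_injective h))
        exact Finset.disjoint_left.mp hdisj (mk_mem_toEdge_iff.mpr rfl)
          (mk_mem_toEdge_iff.mpr hgz)
      have hmaps : ∀ g ∈ N, g ⟨0, hr⟩ ∈
          (univ.filter fun x : Fin (n ⟨0, hr⟩) => (x : ℕ) < k - 1) := by
        intro g hg
        have := (Fintype.mem_piFinset.mp (mem_filter.mp hg).1) ⟨0, hr⟩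
        simpa [hA] using this
      have hcardle := Finset.card_le_card_of_injOn _ hmaps hinj
      rw [hNcard, card_filter_lt _ _ (by omega)] at hcardle
      omega
    · rw [Finset.card_image_of_injective _ toEdge_injective, hG₀, Fintype.card_piFinset]
      rw [← Finset.prod_filter_mul_prod_filter_not univ (fun i : Fin r => 0 < i.val)]
      have h1 : ∀ i ∈ univ.filter (fun i : Fin r => 0 < i.val), (A i).card = n i := by
        intro i hi
        have hne0 : (i : ℕ) ≠ 0 := by have := (mem_filter.mp hi).2; omega
        simp [hA, hne0]
      have h2 : univ.filter (fun i : Fin r => ¬ 0 < i.val) = {(⟨0, hr⟩ : Fin r)} := by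
        ext i
        simp only [mem_filter, mem_univ, true_and, mem_singleton, Fin.ext_iff]
        constructor
        · intro h; omega
        · intro h; omega
      rw [Finset.prod_congr rfl h1, h2, Finset.prod_singleton]
      have h3 : (A ⟨0, hr⟩).card = k - 1 := by
        rw [hA]
        simp only [if_pos rfl]
        exact card_filter_lt _ _ (by omega)
      rw [h3, mul_comm]
  · -- upper bound
    rintro m ⟨H, hH, hnm, rfl⟩
    set G := univ.filter (fun g : ∀ i, Fin (n i) => toEdge n g ∈ H) with hG
    have hcardGH : G.card = H.card := by
      apply Finset.card_bij (fun g _ => toEdge n g)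
      · intro g hg; exact (mem_filter.mp hg).2
      · intro g hg g' hg' h; exact toEdge_injective h
      · intro e he
        obtain ⟨g, rfl⟩ := exists_toEdge (hH he)
        exact ⟨g, mem_filter.mpr ⟨mem_univ _, he⟩, rfl⟩
    set filt := univ.filter (fun i : Fin r => 0 < i.val) with hfilt
    set φ : (∀ i, Fin (n i)) → (∀ i ∈ filt, ℕ) :=
      fun g => fun i _ => ((g i : ℕ) + (n i - (g ⟨0, hr⟩ : ℕ))) % n i with hφ
    set t := filt.pi (fun i => Finset.range (n i)) with ht
    have hmem : ∀ g ∈ G, φ g ∈ t := by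
      intro g hg
      rw [ht, Finset.mem_pi]
      intro i hi
      exact Finset.mem_range.mpr (Nat.mod_lt _ (hnpos i))
    have hsum := Finset.card_eq_sum_card_fiberwise hmem
    have hfib : ∀ a ∈ t, (G.filter fun g => φ g = a).card ≤ k - 1 := by
      intro a ha
      by_contra hgt
      obtain ⟨F, hFsub, hFcard⟩ := Finset.exists_subset_card_eq
        (show k ≤ (G.filter fun g => φ g = a).card by omega)
      apply hnm
      refine ⟨F.image (toEdge n), ?_, ?_, ?_⟩
      · intro e he
        obtain ⟨g, hg, rfl⟩ := mem_image.mp he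
        exact (mem_filter.mp (mem_filter.mp (hFsub hg)).1).2
      · rw [Finset.card_image_of_injective _ toEdge_injective, hFcard]
      · intro e he e' he' hne
        obtain ⟨g, hg, rfl⟩ := mem_image.mp (mem_coe.mp he)
        obtain ⟨g', hg', rfl⟩ := mem_image.mp (mem_coe.mp he')
        have hgne : g ≠ g' := fun h => hne (by rw [h])
        have h1 := (mem_filter.mp (hFsub hg)).2
        have h2 := (mem_filter.mp (hFsub hg')).2
        apply toEdge_disjoint
        apply fiber_ne hr hmono hk hkn ?_ hgne
        intro i hi
        have heq : φ g = φ g' := h1.trans h2.symm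
        exact congrFun (congrFun heq i) (mem_filter.mpr ⟨mem_univ _, hi⟩)
    rw [← hcardGH, hsum]
    calc ∑ a ∈ t, (G.filter fun g => φ g = a).card
        ≤ ∑ _a ∈ t, (k - 1) := Finset.sum_le_sum hfib
      _ = t.card * (k - 1) := by rw [Finset.sum_const, smul_eq_mul]
      _ = (k - 1) * ∏ i ∈ filt, n i := by
          rw [ht, Finset.card_pi, mul_comm]
          congr 1
          exact Finset.prod_congr rfl (fun i _ => Finset.card_range (n i))
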